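/- Let {α_k} ⊂ D be Verblunsky coefficients, β ∈ ∂D, and n ≥ 1. (1) If 1 < r ≤ R, then for all z with r ≤ |z| ≤ R one has Φ_n^{(β)}(z) ≠ 0 and (r−1)²/(R+1) < |Φ_{n+1}^{(β)}(z)/Φ_n^{(β)}(z)| < (R+1)²/(r−1). (2) If 0 < r ≤ R < 1, then for all z with r ≤ |z| ≤ R one has Φ_n^{(β)}(z) ≠ 0 and r²(1−R)²/(R²(1+r)) < |Φ_{n+1}^{(β)}(z)/Φ_n^{(β)}(z)| < R²(1+r)²/(r²(1−R)). -/

import Mathlib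

open Polynomial Filter

noncomputable section

/-- Monic OPUC via the Szegő recursion, with reversed polynomial
`Φ*_n = z^n conj(Φ_n(1/conj z))` realized as `reflect n` of the conjugated polynomial. -/
def szPhi (α : ℕ → ℂ) : ℕ → Polynomial ℂ
  | 0 => 1
  | n + 1 =>
      X * szPhi α n -
        C ((starRingEnd ℂ) (α n)) * Polynomial.reflect n ((szPhi α n).map (starRingEnd ℂ))

/-- The reversed polynomial `Φ*_n(z) = z^n conj(Φ_n(1/conj z))`. -/
def szPhiStar (α : ℕ → ℂ) (n : ℕ) : Polynomial ℂ :=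
  Polynomial.reflect n ((szPhi α n).map (starRingEnd ℂ))

/-- Paraorthogonal polynomial `Φ_n^{(β)}(z) = zΦ_{n-1}(z) - conj(β) Φ*_{n-1}(z)`. -/
def popuc (α : ℕ → ℂ) (β : ℂ) (n : ℕ) : Polynomial ℂ :=
  X * szPhi α (n - 1) - C ((starRingEnd ℂ) β) * szPhiStar α (n - 1)

lemma my_reflect_reflect (N : ℕ) (p : Polynomial ℂ) : reflect N (reflect N p) = p := by
  ext i
  rw [coeff_reflect, coeff_reflect, revAt_invol]

lemma natDegree_szPhi_le (α : ℕ → ℂ) : ∀ m, (szPhi α m).natDegree ≤ m := by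
  intro m
  induction m with
  | zero => simp [szPhi]
  | succ m ih =>
      rw [szPhi]
      refine le_trans (natDegree_sub_le _ _) ?_
      refine max_le ?_ ?_
      · refine le_trans (natDegree_mul_le (p := X) (q := szPhi α m)) ?_
        calc (X : Polynomial ℂ).natDegree + (szPhi α m).natDegree ≤ 1 + m := add_le_add natDegree_X_le ih
        _ = m + 1 := Nat.add_comm 1 m
      · refine le_trans (natDegree_mul_le (p := C ((starRingEnd ℂ) (α m)))) ?_
        simp only [natDegree_C, zero_add]
        refine le_trans (natDegree_le_iff_coeff_eq_zero.2 fun N hN => ?_) (Nat.le_succ m)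
        rw [coeff_reflect, revAt]
        show (Polynomial.map (starRingEnd ℂ) (szPhi α m)).coeff (if N ≤ m then m - N else N) = 0
        rw [if_neg (by omega)]
        exact coeff_eq_zero_of_natDegree_lt (lt_of_le_of_lt natDegree_map_le (lt_of_le_of_lt ih hN))

lemma szPhiStar_zero (α : ℕ → ℂ) : szPhiStar α 0 = 1 := by
  simp [szPhiStar, szPhi]

lemma szPhiStar_succ (α : ℕ → ℂ) (m : ℕ) :
    szPhiStar α (m + 1) = szPhiStar α m - C (α m) * (X * szPhi α m) := by
  have hdeg : (szPhi α m).natDegree ≤ m := natDegree_szPhi_le α m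
  have hdegc : ((szPhi α m).map (starRingEnd ℂ)).natDegree ≤ m :=
    le_trans natDegree_map_le hdeg
  rw [szPhiStar, szPhi, Polynomial.map_sub, Polynomial.map_mul, Polynomial.map_mul,
    map_C, reflect_sub]
  congr 1
  · rw [Polynomial.map_X]
    have := reflect_mul (X : Polynomial ℂ) ((szPhi α m).map (starRingEnd ℂ)) natDegree_X_le hdegc
    rw [show (1 + m) = m + 1 from Nat.add_comm 1 m] at this
    rw [this, reflect_one_X, one_mul]
    rfl
  · rw [← reflect_map, Polynomial.map_map]
    have hid : (starRingEnd ℂ).comp (starRingEnd ℂ) = RingHom.id ℂ := by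
      ext x; simp
    rw [hid, Polynomial.map_id, reflect_C_mul]
    have h2 : reflect (m + 1) (reflect m (szPhi α m)) = X * szPhi α m := by
      have hx : reflect (m + 1) (X * szPhi α m) = reflect m (szPhi α m) := by
        have := reflect_mul (X : Polynomial ℂ) (szPhi α m) natDegree_X_le hdeg
        rw [show (1 + m) = m + 1 from Nat.add_comm 1 m] at this
        rw [this, reflect_one_X, one_mul]
      rw [← hx, my_reflect_reflect]
    rw [h2]
    simp

lemma eval_szPhi_succ (α : ℕ → ℂ) (m : ℕ) (z : ℂ) :
    (szPhi α (m + 1)).eval z =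
      z * (szPhi α m).eval z - (starRingEnd ℂ) (α m) * (szPhiStar α m).eval z := by
  rw [szPhi]
  simp [szPhiStar]

lemma eval_szPhiStar_succ (α : ℕ → ℂ) (m : ℕ) (z : ℂ) :
    (szPhiStar α (m + 1)).eval z =
      (szPhiStar α m).eval z - α m * (z * (szPhi α m).eval z) := by
  rw [szPhiStar_succ]
  simp

lemma normSq_step (a z p q : ℂ) :
    Complex.normSq (z * p - (starRingEnd ℂ) a * q) - Complex.normSq (q - a * (z * p)) =
      (1 - Complex.normSq a) * (Complex.normSq z * Complex.normSq p - Complex.normSq q) := by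
  simp only [Complex.normSq_apply, Complex.sub_re, Complex.sub_im, Complex.mul_re,
    Complex.mul_im, Complex.conj_re, Complex.conj_im]
  ring

lemma out_bound (α : ℕ → ℂ) (hα : ∀ k, norm (α k) < 1) :
    ∀ m (z : ℂ), 1 ≤ norm z →
      norm ((szPhiStar α m).eval z) ≤ norm ((szPhi α m).eval z) ∧
        (szPhi α m).eval z ≠ 0 := by
  intro m
  induction m with
  | zero => intro z _; simp [szPhi, szPhiStar_zero]
  | succ m ih =>
      intro z hz
      obtain ⟨hle, hne⟩ := ih z hz
      have ha : norm (α m) < 1 := hα m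
      have hp : 0 < norm ((szPhi α m).eval z) := by
        simpa [norm_pos_iff] using hne
      constructor
      · have key := normSq_step (α m) z ((szPhi α m).eval z) ((szPhiStar α m).eval z)
        rw [← eval_szPhi_succ, ← eval_szPhiStar_succ] at key
        have h1 : Complex.normSq (α m) < 1 := by
          have := Complex.sq_norm (α m)
          nlinarith [norm_nonneg (α m)]
        have h2 : Complex.normSq ((szPhiStar α m).eval z) ≤
            Complex.normSq ((szPhi α m).eval z) := by
          have e1 := Complex.sq_norm ((szPhiStar α m).eval z)
          have e2 := Complex.sq_norm ((szPhi α m).eval z)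
          nlinarith [norm_nonneg ((szPhiStar α m).eval z)]
        have h3 : 1 ≤ Complex.normSq z := by
          have := Complex.sq_norm z; nlinarith
        have h5 : Complex.normSq ((szPhiStar α m).eval z) ≤
            Complex.normSq z * Complex.normSq ((szPhi α m).eval z) := by
          nlinarith [Complex.normSq_nonneg ((szPhi α m).eval z)]
        have h4 : Complex.normSq ((szPhiStar α (m+1)).eval z) ≤
            Complex.normSq ((szPhi α (m+1)).eval z) := by
          nlinarith [mul_nonneg (by linarith : (0:ℝ) ≤ 1 - Complex.normSq (α m))
            (by linarith : (0:ℝ) ≤ Complex.normSq z * Complex.normSq ((szPhi α m).eval z)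
              - Complex.normSq ((szPhiStar α m).eval z))]
        have e1 := Complex.sq_norm ((szPhiStar α (m+1)).eval z)
        have e2 := Complex.sq_norm ((szPhi α (m+1)).eval z)
        nlinarith [norm_nonneg ((szPhiStar α (m+1)).eval z),
          norm_nonneg ((szPhi α (m+1)).eval z)]
      · have hlow : (1 - norm (α m)) * norm ((szPhi α m).eval z) ≤
            norm ((szPhi α (m+1)).eval z) := by
          rw [eval_szPhi_succ]
          have := norm_sub_norm_le (z * (szPhi α m).eval z)
            ((starRingEnd ℂ) (α m) * (szPhiStar α m).eval z)
          simp only [norm_mul, map_mul, Complex.norm_conj] at this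
          nlinarith [mul_nonneg (by linarith : (0:ℝ) ≤ norm z - 1) hp.le,
            mul_nonneg (norm_nonneg (α m))
              (by linarith : (0:ℝ) ≤ norm ((szPhi α m).eval z)
                - norm ((szPhiStar α m).eval z))]
        intro h0
        rw [h0] at hlow
        simp only [norm_zero] at hlow
        nlinarith

lemma in_bound (α : ℕ → ℂ) (hα : ∀ k, norm (α k) < 1) :
    ∀ m (z : ℂ), norm z ≤ 1 →
      norm ((szPhi α m).eval z) ≤ norm ((szPhiStar α m).eval z) ∧
        (szPhiStar α m).eval z ≠ 0 := by
  intro m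
  induction m with
  | zero => intro z _; simp [szPhi, szPhiStar_zero]
  | succ m ih =>
      intro z hz
      obtain ⟨hle, hne⟩ := ih z hz
      have ha : norm (α m) < 1 := hα m
      have hq : 0 < norm ((szPhiStar α m).eval z) := by
        simpa [norm_pos_iff] using hne
      constructor
      · have key := normSq_step (α m) z ((szPhi α m).eval z) ((szPhiStar α m).eval z)
        rw [← eval_szPhi_succ, ← eval_szPhiStar_succ] at key
        have h1 : Complex.normSq (α m) < 1 := by
          have := Complex.sq_norm (α m)
          nlinarith [norm_nonneg (α m)]
        have h2 : Complex.normSq ((szPhi α m).eval z) ≤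
            Complex.normSq ((szPhiStar α m).eval z) := by
          have e1 := Complex.sq_norm ((szPhiStar α m).eval z)
          have e2 := Complex.sq_norm ((szPhi α m).eval z)
          nlinarith [norm_nonneg ((szPhi α m).eval z)]
        have h3 : Complex.normSq z ≤ 1 := by
          have := Complex.sq_norm z
          nlinarith [norm_nonneg z]
        have h5 : Complex.normSq z * Complex.normSq ((szPhi α m).eval z) ≤
            Complex.normSq ((szPhiStar α m).eval z) := by
          nlinarith [Complex.normSq_nonneg ((szPhi α m).eval z), Complex.normSq_nonneg z]
        have h4 : Complex.normSq ((szPhi α (m+1)).eval z) ≤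
            Complex.normSq ((szPhiStar α (m+1)).eval z) := by
          nlinarith [mul_nonneg (by linarith : (0:ℝ) ≤ 1 - Complex.normSq (α m))
            (by linarith : (0:ℝ) ≤ Complex.normSq ((szPhiStar α m).eval z)
              - Complex.normSq z * Complex.normSq ((szPhi α m).eval z))]
        have e1 := Complex.sq_norm ((szPhiStar α (m+1)).eval z)
        have e2 := Complex.sq_norm ((szPhi α (m+1)).eval z)
        nlinarith [norm_nonneg ((szPhiStar α (m+1)).eval z),
          norm_nonneg ((szPhi α (m+1)).eval z)]
      · have hlow : (1 - norm (α m)) * norm ((szPhiStar α m).eval z) ≤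
            norm ((szPhiStar α (m+1)).eval z) := by
          rw [eval_szPhiStar_succ]
          have := norm_sub_norm_le ((szPhiStar α m).eval z)
            ((α m) * (z * (szPhi α m).eval z))
          simp only [norm_mul, map_mul] at this
          have hzp : norm z * norm ((szPhi α m).eval z) ≤
              norm ((szPhiStar α m).eval z) := by
            nlinarith [norm_nonneg ((szPhi α m).eval z), norm_nonneg z]
          nlinarith [mul_le_mul_of_nonneg_left hzp (norm_nonneg (α m))]
        intro h0
        rw [h0] at hlow
        simp only [norm_zero] at hlow
        nlinarith

lemma absAB (a β z : ℂ) (hβ : norm β = 1) :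
    norm (z + (starRingEnd ℂ) β * a) ^ 2
      - norm ((starRingEnd ℂ) a * z + (starRingEnd ℂ) β) ^ 2 =
      (norm z ^ 2 - 1) * (1 - norm a ^ 2) := by
  have hnβ : β.re * β.re + β.im * β.im = 1 := by
    have h := Complex.sq_norm β
    rw [hβ] at h
    simpa [Complex.normSq_apply] using h.symm
  rw [Complex.sq_norm, Complex.sq_norm, Complex.sq_norm, Complex.sq_norm]
  simp only [Complex.normSq_apply, Complex.add_re, Complex.add_im, Complex.mul_re,
    Complex.mul_im, Complex.conj_re, Complex.conj_im]
  linear_combination (a.re * a.re + a.im * a.im - 1) * hnβ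

lemma arith_out (s p q A B aa e0 e1 r R : ℝ)
    (hp : 0 < p) (hq0 : 0 ≤ q) (hqp : q ≤ p) (ha0 : 0 ≤ aa) (ha : aa < 1)
    (hA0 : 0 ≤ A) (hB0 : 0 ≤ B)
    (hAB : A ^ 2 - B ^ 2 = (s ^ 2 - 1) * (1 - aa ^ 2))
    (hAlow : s - aa ≤ A) (hAup : A ≤ s + aa) (hBup : B ≤ aa * s + 1)
    (hE0low : s * p - q ≤ e0) (hE0up : e0 ≤ s * p + q)
    (hE1low : s * A * p - B * q ≤ e1) (hE1up : e1 ≤ s * A * p + B * q)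
    (hr : 1 < r) (hrR : r ≤ R) (hzr : r ≤ s) (hzR : s ≤ R) :
    0 < e0 ∧ (r - 1) ^ 2 / (R + 1) < e1 / e0 ∧ e1 / e0 < (R + 1) ^ 2 / (r - 1) := by
  have hs1 : 1 < s := lt_of_lt_of_le hr hzr
  have hs0 : (0:ℝ) < s := by linarith
  have haa1 : (0:ℝ) < 1 - aa := by linarith
  have he0pos : 0 < e0 := by
    linarith [mul_pos (show (0:ℝ) < s - 1 by linarith) hp]
  have hs2 : (1:ℝ) ≤ s ^ 2 := by
    have h := mul_le_mul hs1.le hs1.le zero_le_one (by linarith : (0:ℝ) ≤ s)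
    linarith [h]
  have haa2 : aa ^ 2 ≤ 1 := by
    have h := mul_le_mul ha.le ha.le ha0 zero_le_one
    linarith [h]
  have hB2A2 : B ^ 2 ≤ A ^ 2 := by
    have h := mul_nonneg (by linarith : (0:ℝ) ≤ s ^ 2 - 1) (by linarith : (0:ℝ) ≤ 1 - aa ^ 2)
    linarith
  have hBA : B ≤ A := by
    by_contra hcon
    push_neg at hcon
    have h := mul_lt_mul' hcon.le hcon hA0 (lt_of_le_of_lt hA0 hcon)
    linarith [h, hB2A2]
  have hE1lowf : (r - 1) ^ 2 * p < e1 := by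
    have hstep : (s - 1) * (s - aa) ≤ s * A - B := by
      have h := mul_nonneg (by linarith : (0:ℝ) ≤ s - 1)
        (by linarith : (0:ℝ) ≤ A - (s - aa))
      linarith
    have hgt : (r - 1) ^ 2 < (s - 1) * (s - aa) := by
      have h1 := mul_pos (show (0:ℝ) < s - 1 by linarith) haa1
      have h2 := mul_nonneg (show (0:ℝ) ≤ s - r by linarith)
        (show (0:ℝ) ≤ s + r - 2 by linarith)
      linarith
    have h1 : (r - 1) ^ 2 * p < (s * A - B) * p :=
      mul_lt_mul_of_pos_right (lt_of_lt_of_le hgt hstep) hp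
    have h2 : B * q ≤ B * p := mul_le_mul_of_nonneg_left hqp hB0
    linarith
  have hE1upf : e1 < (R + 1) ^ 2 * p := by
    have h1 : s * A * p ≤ s * (s + aa) * p :=
      mul_le_mul_of_nonneg_right (mul_le_mul_of_nonneg_left hAup hs0.le) hp.le
    have h2 : B * q ≤ (aa * s + 1) * p :=
      mul_le_mul hBup hqp hq0 (by linarith [mul_nonneg ha0 hs0.le])
    have h3 : (s * (s + aa) + (aa * s + 1)) * p < (R + 1) ^ 2 * p := by
      refine mul_lt_mul_of_pos_right ?_ hp
      have k1 := mul_pos hs0 haa1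
      have k2 := mul_nonneg (show (0:ℝ) ≤ R - s by linarith)
        (show (0:ℝ) ≤ R + s + 2 by linarith)
      linarith
    linarith
  refine ⟨he0pos, ?_, ?_⟩
  · rw [div_lt_div_iff₀ (by linarith) he0pos]
    have hE0upf : e0 ≤ (R + 1) * p := by
      linarith [mul_le_mul_of_nonneg_right hzR hp.le]
    have k1 := mul_le_mul_of_nonneg_left hE0upf (sq_nonneg (r - 1))
    have k2 := mul_lt_mul_of_pos_right hE1lowf (show (0:ℝ) < R + 1 by linarith)
    linarith [k1, k2]
  · rw [div_lt_div_iff₀ he0pos (by linarith)]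
    have hE0lowf : (r - 1) * p ≤ e0 := by
      linarith [mul_le_mul_of_nonneg_right hzr hp.le]
    have k1 := mul_le_mul_of_nonneg_left hE0lowf (sq_nonneg (R + 1))
    have k2 := mul_lt_mul_of_pos_right hE1upf (show (0:ℝ) < r - 1 by linarith)
    linarith [k1, k2]

lemma arith_in (s p q A B aa e0 e1 r R : ℝ)
    (hq : 0 < q) (hp0 : 0 ≤ p) (hpq : p ≤ q) (ha0 : 0 ≤ aa) (ha : aa < 1)
    (hA0 : 0 ≤ A) (hB0 : 0 ≤ B)
    (hAB : A ^ 2 - B ^ 2 = (s ^ 2 - 1) * (1 - aa ^ 2))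
    (hAup : A ≤ s + aa) (hBlow : 1 - aa * s ≤ B) (hBup : B ≤ aa * s + 1)
    (hE0low : q - s * p ≤ e0) (hE0up : e0 ≤ s * p + q)
    (hE1low : B * q - s * A * p ≤ e1) (hE1up : e1 ≤ s * A * p + B * q)
    (hr : 0 < r) (hrR : r ≤ R) (hR1 : R < 1) (hzr : r ≤ s) (hzR : s ≤ R) :
    0 < e0 ∧ r ^ 2 * (1 - R) ^ 2 / (R ^ 2 * (1 + r)) < e1 / e0 ∧
      e1 / e0 < R ^ 2 * (1 + r) ^ 2 / (r ^ 2 * (1 - R)) := by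
  have hs0 : (0:ℝ) < s := lt_of_lt_of_le hr hzr
  have hs1 : s < 1 := lt_of_le_of_lt hzR hR1
  have hR0 : (0:ℝ) < R := lt_of_lt_of_le hr hrR
  have hsp_sq : s * p ≤ s * q := mul_le_mul_of_nonneg_left hpq hs0.le
  have he0pos : 0 < e0 := by
    linarith [mul_pos (show (0:ℝ) < 1 - s by linarith) hq]
  have hs2 : s ^ 2 ≤ 1 := by
    have h := mul_le_mul hs1.le hs1.le hs0.le zero_le_one
    linarith [h]
  have haa2 : aa ^ 2 ≤ 1 := by
    have h := mul_le_mul ha.le ha.le ha0 zero_le_one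
    linarith [h]
  have hA2B2 : A ^ 2 ≤ B ^ 2 := by
    have h := mul_nonneg (by linarith : (0:ℝ) ≤ 1 - s ^ 2) (by linarith : (0:ℝ) ≤ 1 - aa ^ 2)
    linarith
  have hAB' : A ≤ B := by
    by_contra hcon
    push_neg at hcon
    have h := mul_lt_mul' hcon.le hcon hB0 (lt_of_le_of_lt hB0 hcon)
    linarith [h, hA2B2]
  have hE1lowf : (1 - R) ^ 2 * q < e1 := by
    have hstep : (1 - s) * (1 - aa * s) ≤ B - s * A := by
      have h1 := mul_nonneg (show (0:ℝ) ≤ 1 - s by linarith)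
        (show (0:ℝ) ≤ B - (1 - aa * s) by linarith)
      have h2 := mul_nonneg hs0.le (show (0:ℝ) ≤ B - A by linarith)
      linarith
    have hgt : (1 - R) ^ 2 < (1 - s) * (1 - aa * s) := by
      have h1 := mul_pos (show (0:ℝ) < 1 - s by linarith)
        (mul_pos hs0 (show (0:ℝ) < 1 - aa by linarith))
      have h2 := mul_nonneg (show (0:ℝ) ≤ R - s by linarith)
        (show (0:ℝ) ≤ 2 - R - s by linarith)
      linarith [h1, h2]
    have h1 : (1 - R) ^ 2 * q < (B - s * A) * q :=
      mul_lt_mul_of_pos_right (lt_of_lt_of_le hgt hstep) hq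
    have h2 : s * A * p ≤ s * A * q :=
      mul_le_mul_of_nonneg_left hpq (mul_nonneg hs0.le hA0)
    linarith
  have hE1upf : e1 < (1 + R) ^ 2 * q := by
    have h1 : s * A * q ≤ s * (s + aa) * q :=
      mul_le_mul_of_nonneg_right (mul_le_mul_of_nonneg_left hAup hs0.le) hq.le
    have h1' : s * A * p ≤ s * A * q :=
      mul_le_mul_of_nonneg_left hpq (mul_nonneg hs0.le hA0)
    have h2 : B * q ≤ (aa * s + 1) * q := mul_le_mul_of_nonneg_right hBup hq.le
    have h3 : (s * (s + aa) + (aa * s + 1)) * q < (1 + R) ^ 2 * q := by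
      refine mul_lt_mul_of_pos_right ?_ hq
      have k1 := mul_pos hs0 (show (0:ℝ) < 1 - aa by linarith)
      have k2 := mul_nonneg (show (0:ℝ) ≤ R - s by linarith)
        (show (0:ℝ) ≤ R + s + 2 by linarith)
      linarith
    linarith
  have hrR2 : r ^ 2 * (1 + R) ≤ R ^ 2 * (1 + r) := by
    have h1 : r * r ≤ R * R := mul_le_mul hrR hrR hr.le hR0.le
    have h2 := mul_nonneg (mul_nonneg hr.le hR0.le) (show (0:ℝ) ≤ R - r by linarith)
    linarith [h1, h2]
  have hden1 : (0:ℝ) < R ^ 2 * (1 + r) := by positivity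
  have h1R : (0:ℝ) < 1 - R := by linarith
  have hden2 : (0:ℝ) < r ^ 2 * (1 - R) := by positivity
  have hE0upf : e0 ≤ (1 + R) * q := by
    linarith [mul_le_mul_of_nonneg_right hzR hq.le]
  have hE0lowf : (1 - R) * q ≤ e0 := by
    linarith [mul_le_mul_of_nonneg_right hzR hq.le]
  refine ⟨he0pos, ?_, ?_⟩
  · rw [div_lt_div_iff₀ hden1 he0pos]
    have k1 : r ^ 2 * (1 - R) ^ 2 * e0 ≤ r ^ 2 * (1 - R) ^ 2 * ((1 + R) * q) :=
      mul_le_mul_of_nonneg_left hE0upf (by positivity)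
    have k2 : r ^ 2 * (1 + R) * ((1 - R) ^ 2 * q) ≤ R ^ 2 * (1 + r) * ((1 - R) ^ 2 * q) :=
      mul_le_mul_of_nonneg_right hrR2 (by positivity)
    have k3 : R ^ 2 * (1 + r) * ((1 - R) ^ 2 * q) < R ^ 2 * (1 + r) * e1 :=
      mul_lt_mul_of_pos_left hE1lowf hden1
    linarith [k1, k2, k3]
  · rw [div_lt_div_iff₀ he0pos hden2]
    have k1 : e1 * (r ^ 2 * (1 - R)) < (1 + R) ^ 2 * q * (r ^ 2 * (1 - R)) :=
      mul_lt_mul_of_pos_right hE1upf hden2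
    have base : r * (1 + R) ≤ R * (1 + r) := by nlinarith
    have k2 : r ^ 2 * (1 + R) ^ 2 ≤ R ^ 2 * (1 + r) ^ 2 := by
      have h := mul_le_mul base base
        (mul_nonneg hr.le (by linarith)) (mul_nonneg hR0.le (by linarith))
      linarith [h]
    have k3 : r ^ 2 * (1 + R) ^ 2 * ((1 - R) * q) ≤ R ^ 2 * (1 + r) ^ 2 * ((1 - R) * q) :=
      mul_le_mul_of_nonneg_right k2 (mul_nonneg h1R.le hq.le)
    have k4 : R ^ 2 * (1 + r) ^ 2 * ((1 - R) * q) ≤ R ^ 2 * (1 + r) ^ 2 * e0 :=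
      mul_le_mul_of_nonneg_left hE0lowf (by positivity)
    linarith [k1, k3, k4]

lemma core_out (a β z P Q : ℂ) (ha : norm a < 1) (hβ : norm β = 1)
    (hqp : norm Q ≤ norm P) (hP : P ≠ 0) (r R : ℝ) (hr : 1 < r) (hrR : r ≤ R)
    (hzr : r ≤ norm z) (hzR : norm z ≤ R) :
    z * P - (starRingEnd ℂ) β * Q ≠ 0 ∧
    (r - 1) ^ 2 / (R + 1) <
      norm ((z * (z + (starRingEnd ℂ) β * a) * P
        - ((starRingEnd ℂ) a * z + (starRingEnd ℂ) β) * Q) / (z * P - (starRingEnd ℂ) β * Q)) ∧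
    norm ((z * (z + (starRingEnd ℂ) β * a) * P
        - ((starRingEnd ℂ) a * z + (starRingEnd ℂ) β) * Q) / (z * P - (starRingEnd ℂ) β * Q)) <
      (R + 1) ^ 2 / (r - 1) := by
  have hp : 0 < norm P := by simpa [norm_pos_iff] using hP
  have hE0low : norm z * norm P - norm Q ≤
      norm (z * P - (starRingEnd ℂ) β * Q) := by
    have := norm_sub_norm_le (z * P) ((starRingEnd ℂ) β * Q)
    simp only [norm_mul, map_mul, Complex.norm_conj, hβ, one_mul] at this
    linarith
  have hE0up : norm (z * P - (starRingEnd ℂ) β * Q) ≤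
      norm z * norm P + norm Q := by
    have := norm_sub_le (z * P) ((starRingEnd ℂ) β * Q)
    simp only [norm_mul, map_mul, Complex.norm_conj, hβ, one_mul] at this
    linarith
  have hAlow : norm z - norm a ≤ norm (z + (starRingEnd ℂ) β * a) := by
    have := norm_sub_norm_le z (-((starRingEnd ℂ) β * a))
    simpa [norm_mul, map_mul, Complex.norm_conj, hβ, sub_neg_eq_add] using this
  have hAup : norm (z + (starRingEnd ℂ) β * a) ≤ norm z + norm a := by
    have := norm_add_le z ((starRingEnd ℂ) β * a)
    simpa [norm_mul, map_mul, Complex.norm_conj, hβ] using this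
  have hBup : norm ((starRingEnd ℂ) a * z + (starRingEnd ℂ) β) ≤
      norm a * norm z + 1 := by
    have := norm_add_le ((starRingEnd ℂ) a * z) ((starRingEnd ℂ) β)
    simpa [norm_mul, map_mul, Complex.norm_conj, hβ] using this
  have hE1low : norm z * norm (z + (starRingEnd ℂ) β * a) * norm P
      - norm ((starRingEnd ℂ) a * z + (starRingEnd ℂ) β) * norm Q ≤
      norm (z * (z + (starRingEnd ℂ) β * a) * P
        - ((starRingEnd ℂ) a * z + (starRingEnd ℂ) β) * Q) := by
    have := norm_sub_norm_le (z * (z + (starRingEnd ℂ) β * a) * P)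
      (((starRingEnd ℂ) a * z + (starRingEnd ℂ) β) * Q)
    simp only [norm_mul, map_mul] at this
    linarith
  have hE1up : norm (z * (z + (starRingEnd ℂ) β * a) * P
        - ((starRingEnd ℂ) a * z + (starRingEnd ℂ) β) * Q) ≤
      norm z * norm (z + (starRingEnd ℂ) β * a) * norm P
      + norm ((starRingEnd ℂ) a * z + (starRingEnd ℂ) β) * norm Q := by
    have := norm_sub_le (z * (z + (starRingEnd ℂ) β * a) * P)
      (((starRingEnd ℂ) a * z + (starRingEnd ℂ) β) * Q)
    simp only [norm_mul, map_mul] at this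
    linarith
  obtain ⟨he0pos, h1, h2⟩ := arith_out (norm z) (norm P) (norm Q)
    (norm (z + (starRingEnd ℂ) β * a))
    (norm ((starRingEnd ℂ) a * z + (starRingEnd ℂ) β)) (norm a)
    (norm (z * P - (starRingEnd ℂ) β * Q))
    (norm (z * (z + (starRingEnd ℂ) β * a) * P
      - ((starRingEnd ℂ) a * z + (starRingEnd ℂ) β) * Q)) r R
    hp (norm_nonneg Q) hqp (norm_nonneg a) ha
    (norm_nonneg _) (norm_nonneg _) (absAB a β z hβ)
    hAlow hAup hBup hE0low hE0up hE1low hE1up hr hrR hzr hzR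
  refine ⟨by simpa [norm_pos_iff] using he0pos, ?_, ?_⟩
  · rw [norm_div]; exact h1
  · rw [norm_div]; exact h2

lemma core_in (a β z P Q : ℂ) (ha : norm a < 1) (hβ : norm β = 1)
    (hpq : norm P ≤ norm Q) (hQ : Q ≠ 0) (r R : ℝ) (hr : 0 < r) (hrR : r ≤ R)
    (hR1 : R < 1) (hzr : r ≤ norm z) (hzR : norm z ≤ R) :
    z * P - (starRingEnd ℂ) β * Q ≠ 0 ∧
    r ^ 2 * (1 - R) ^ 2 / (R ^ 2 * (1 + r)) <
      norm ((z * (z + (starRingEnd ℂ) β * a) * P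
        - ((starRingEnd ℂ) a * z + (starRingEnd ℂ) β) * Q) / (z * P - (starRingEnd ℂ) β * Q)) ∧
    norm ((z * (z + (starRingEnd ℂ) β * a) * P
        - ((starRingEnd ℂ) a * z + (starRingEnd ℂ) β) * Q) / (z * P - (starRingEnd ℂ) β * Q)) <
      R ^ 2 * (1 + r) ^ 2 / (r ^ 2 * (1 - R)) := by
  have hq : 0 < norm Q := by simpa [norm_pos_iff] using hQ
  have hE0low : norm Q - norm z * norm P ≤
      norm (z * P - (starRingEnd ℂ) β * Q) := by
    have := norm_sub_norm_le ((starRingEnd ℂ) β * Q) (z * P)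
    rw [← norm_neg (_ - _)] at this
    simp only [norm_mul, map_mul, Complex.norm_conj, hβ, one_mul, neg_sub] at this
    linarith
  have hE0up : norm (z * P - (starRingEnd ℂ) β * Q) ≤
      norm z * norm P + norm Q := by
    have := norm_sub_le (z * P) ((starRingEnd ℂ) β * Q)
    simp only [norm_mul, map_mul, Complex.norm_conj, hβ, one_mul] at this
    linarith
  have hAup : norm (z + (starRingEnd ℂ) β * a) ≤ norm z + norm a := by
    have := norm_add_le z ((starRingEnd ℂ) β * a)
    simpa [norm_mul, map_mul, Complex.norm_conj, hβ] using this
  have hBlow : 1 - norm a * norm z ≤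
      norm ((starRingEnd ℂ) a * z + (starRingEnd ℂ) β) := by
    have := norm_sub_norm_le ((starRingEnd ℂ) β) (-((starRingEnd ℂ) a * z))
    simpa [norm_mul, map_mul, Complex.norm_conj, hβ, sub_neg_eq_add, add_comm] using this
  have hBup : norm ((starRingEnd ℂ) a * z + (starRingEnd ℂ) β) ≤
      norm a * norm z + 1 := by
    have := norm_add_le ((starRingEnd ℂ) a * z) ((starRingEnd ℂ) β)
    simpa [norm_mul, map_mul, Complex.norm_conj, hβ] using this
  have hE1low : norm ((starRingEnd ℂ) a * z + (starRingEnd ℂ) β) * norm Q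
      - norm z * norm (z + (starRingEnd ℂ) β * a) * norm P ≤
      norm (z * (z + (starRingEnd ℂ) β * a) * P
        - ((starRingEnd ℂ) a * z + (starRingEnd ℂ) β) * Q) := by
    have := norm_sub_norm_le (((starRingEnd ℂ) a * z + (starRingEnd ℂ) β) * Q)
      (z * (z + (starRingEnd ℂ) β * a) * P)
    rw [← norm_neg (_ - _)] at this
    simp only [norm_mul, map_mul, neg_sub] at this
    linarith
  have hE1up : norm (z * (z + (starRingEnd ℂ) β * a) * P
        - ((starRingEnd ℂ) a * z + (starRingEnd ℂ) β) * Q) ≤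
      norm z * norm (z + (starRingEnd ℂ) β * a) * norm P
      + norm ((starRingEnd ℂ) a * z + (starRingEnd ℂ) β) * norm Q := by
    have := norm_sub_le (z * (z + (starRingEnd ℂ) β * a) * P)
      (((starRingEnd ℂ) a * z + (starRingEnd ℂ) β) * Q)
    simp only [norm_mul, map_mul] at this
    linarith
  obtain ⟨he0pos, h1, h2⟩ := arith_in (norm z) (norm P) (norm Q)
    (norm (z + (starRingEnd ℂ) β * a))
    (norm ((starRingEnd ℂ) a * z + (starRingEnd ℂ) β)) (norm a)
    (norm (z * P - (starRingEnd ℂ) β * Q))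
    (norm (z * (z + (starRingEnd ℂ) β * a) * P
      - ((starRingEnd ℂ) a * z + (starRingEnd ℂ) β) * Q)) r R
    hq (norm_nonneg P) hpq (norm_nonneg a) ha
    (norm_nonneg _) (norm_nonneg _) (absAB a β z hβ)
    hAup hBlow hBup hE0low hE0up hE1low hE1up hr hrR hR1 hzr hzR
  refine ⟨by simpa [norm_pos_iff] using he0pos, ?_, ?_⟩
  · rw [norm_div]; exact h1
  · rw [norm_div]; exact h2


/-- Bounds on the ratio of two consecutive paraorthogonal polynomials in annuli
outside and inside the unit circle. -/
theorem stmt3 (α : ℕ → ℂ) (hα : ∀ k, ‖α k‖ < 1)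
    (β : ℂ) (hβ : ‖β‖ = 1) (n : ℕ) (hn : 1 ≤ n) :
    (∀ r R : ℝ, 1 < r → r ≤ R → ∀ z : ℂ, r ≤ ‖z‖ → ‖z‖ ≤ R →
      (popuc α β n).eval z ≠ 0 ∧
      (r - 1) ^ 2 / (R + 1) <
        ‖(popuc α β (n + 1)).eval z / (popuc α β n).eval z‖ ∧
      ‖(popuc α β (n + 1)).eval z / (popuc α β n).eval z‖ <
        (R + 1) ^ 2 / (r - 1)) ∧
    (∀ r R : ℝ, 0 < r → r ≤ R → R < 1 → ∀ z : ℂ, r ≤ ‖z‖ → ‖z‖ ≤ R →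
      (popuc α β n).eval z ≠ 0 ∧
      r ^ 2 * (1 - R) ^ 2 / (R ^ 2 * (1 + r)) <
        ‖(popuc α β (n + 1)).eval z / (popuc α β n).eval z‖ ∧
      ‖(popuc α β (n + 1)).eval z / (popuc α β n).eval z‖ <
        R ^ 2 * (1 + r) ^ 2 / (r ^ 2 * (1 - R))) := by
  have ha : norm (α (n - 1)) < 1 := hα (n - 1)
  have hE0 : ∀ z : ℂ, (popuc α β n).eval z =
      z * (szPhi α (n - 1)).eval z - (starRingEnd ℂ) β * (szPhiStar α (n - 1)).eval z := by
    intro z; simp [popuc]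
  have hE1 : ∀ z : ℂ, (popuc α β (n + 1)).eval z =
      z * (z + (starRingEnd ℂ) β * α (n - 1)) * (szPhi α (n - 1)).eval z -
        ((starRingEnd ℂ) (α (n - 1)) * z + (starRingEnd ℂ) β) * (szPhiStar α (n - 1)).eval z := by
    intro z
    have h : n + 1 - 1 = (n - 1) + 1 := by omega
    rw [popuc, h]
    simp only [eval_sub, eval_mul, eval_X, eval_C, eval_szPhi_succ, eval_szPhiStar_succ]
    ring
  constructor
  · intro r R hr hrR z hzr hzR
    have hz1 : 1 ≤ norm z := le_trans hr.le hzr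
    obtain ⟨hqp, hP⟩ := out_bound α hα (n - 1) z hz1
    rw [hE0 z, hE1 z]
    exact core_out (α (n - 1)) β z _ _ ha hβ hqp hP r R hr hrR hzr hzR
  · intro r R hr hrR hR1 z hzr hzR
    have hz1 : norm z ≤ 1 := le_trans hzR hR1.le
    obtain ⟨hpq, hQ⟩ := in_bound α hα (n - 1) z hz1
    rw [hE0 z, hE1 z]
    exact core_in (α (n - 1)) β z _ _ ha hβ hpq hQ r R hr hrR hR1 hzr hzR


end
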